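/- Let m ≥ 1, let k_1,…,k_m, l_1,…,l_m be nonnegative integers with k_1 ≥ 1 and l_m ≥ 1, set L_0 = 0, L_i = l_1 + ⋯ + l_i and L = L_m. For a strictly decreasing tuple of positive integers n_1 > ⋯ > n_L > 0 and 1 ≤ j ≤ L, define C_{n_j}^{n_1…n_L} = ( ∏_{i=1}^m 1/n_{L_{i−1}+1}^{k_i} ) · ∏_{i ≠ j} 1/(n_i − n_j). Then for every λ ∈ ℂ that is not a positive integer and every j with 1 ≤ j ≤ L, the sum Σ_{n_1 > ⋯ > n_L > 0} | C_{n_j}^{n_1…n_L} / (n_j − λ) | over all strictly decreasing tuples of positive integers converges (the family is absolutely summable). -/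

import Mathlib

/-- Strictly decreasing sequences of positive integers of length `L`
(encoded as functions `ℕ → ℕ` vanishing from `L` on). -/
def DecSeq (L : ℕ) : Type :=
  {n : ℕ → ℕ //
    (∀ i j : ℕ, i < j → j < L → n j < n i) ∧ (∀ i, i < L → 0 < n i) ∧ ∀ i, L ≤ i → n i = 0}

/-- `Lpart m l i = l₁ + ⋯ + l_{i-1}` (0-indexed: the sum of the `l j` for `j < i`),
i.e. the flat index of the first entry of the `i`-th block. -/
def Lpart (m : ℕ) (l : Fin m → ℕ) (i : Fin m) : ℕ :=
  ∑ j : Fin m, if j < i then l j else 0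

/-- The generating function
`f({kᵢ,lᵢ}ᵢ; λ) = Σ_{n₁ > ⋯ > n_{L_m} > 0} ∏ᵢ [ 1/n_{L_{i-1}+1}^{kᵢ} ∏_j 1/(n_j - λ) ]`. -/
noncomputable def genF (m : ℕ) (k l : Fin m → ℕ) (lam : ℂ) : ℂ :=
  ∑' n : DecSeq (∑ j, l j),
    ∏ i : Fin m,
      (1 / ((n.1 (Lpart m l i) : ℂ)) ^ k i *
        ∏ j ∈ Finset.Ico (Lpart m l i) (Lpart m l i + l i), 1 / ((n.1 j : ℂ) - lam))

/-- Summability of products of summable nonnegative families over `Fin n → ℕ`. -/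
lemma summable_pi_prod : ∀ {n : ℕ} (f : Fin n → ℕ → ℝ), (∀ i, Summable (f i)) →
    (∀ i x, 0 ≤ f i x) → Summable fun v : Fin n → ℕ => ∏ i, f i (v i) := by
  intro n
  induction n with
  | zero =>
    intro f _ _
    simp only [Finset.univ_eq_empty, Finset.prod_empty]
    exact summable_of_finite_support (Set.toFinite _)
  | succ n ih =>
    intro f hs h0
    have key : Summable fun p : ℕ × (Fin n → ℕ) =>
        f 0 p.1 * (∏ i : Fin n, f i.succ (p.2 i)) :=
      Summable.mul_of_nonneg (f := f 0)
        (g := fun v : Fin n → ℕ => ∏ i : Fin n, f i.succ (v i))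
        (hs 0) (ih _ (fun i => hs i.succ) (fun i x => h0 _ x)) (fun x => h0 0 x)
        (fun v => Finset.prod_nonneg fun i _ => h0 _ _)
    rw [← (Fin.consEquiv (fun _ : Fin (n+1) => ℕ)).summable_iff]
    refine key.congr fun p => ?_
    rw [Function.comp_apply, Fin.prod_univ_succ]
    simp [Fin.consEquiv]

/-- `Σ 1/(max x 1)^p` converges for `p < -1`. -/
lemma summable_maxpow (p : ℝ) (hp : p < -1) :
    Summable (fun x : ℕ => (max (x : ℝ) 1) ^ p) := by
  apply (summable_nat_add_iff 1).1
  have h1 : Summable (fun n : ℕ => ((n + 1 : ℕ) : ℝ) ^ p) :=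
    (summable_nat_add_iff 1).2 (Real.summable_nat_rpow.2 hp)
  refine h1.congr fun n => ?_
  have : max ((n + 1 : ℕ) : ℝ) 1 = ((n + 1 : ℕ) : ℝ) := by
    apply max_eq_left; exact_mod_cast Nat.one_le_iff_ne_zero.2 (Nat.succ_ne_zero n)
  rw [this]

/-- A linear lower bound `n/C ≤ ‖n - λ‖` for `λ` not a positive integer. -/
lemma lam_bound (lam : ℂ) (hlam : ∀ n : ℕ, 0 < n → lam ≠ (n : ℂ)) :
    ∃ C : ℝ, 0 < C ∧ ∀ n : ℕ, 1 ≤ n → (n : ℝ) ≤ C * ‖(n : ℂ) - lam‖ := by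
  set N : ℕ := ⌈2 * ‖lam‖⌉₊ + 1 with hN
  refine ⟨2 + ∑ i ∈ Finset.range N, (i : ℝ) / ‖(i : ℂ) - lam‖, by positivity, ?_⟩
  intro n hn
  have hD : 0 < ‖(n : ℂ) - lam‖ := by
    rw [norm_pos_iff, sub_ne_zero]
    exact fun h => hlam n hn h.symm
  rcases lt_or_ge n N with h | h
  · rw [← div_le_iff₀ hD]
    have h1 : (n : ℝ) / ‖(n : ℂ) - lam‖ ≤ ∑ i ∈ Finset.range N, (i : ℝ) / ‖(i : ℂ) - lam‖ :=
      Finset.single_le_sum (f := fun i : ℕ => (i : ℝ) / ‖(i : ℂ) - lam‖)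
        (fun i _ => by positivity) (Finset.mem_range.2 h)
    linarith
  · have h2 : 2 * ‖lam‖ ≤ (n : ℝ) := by
      calc 2 * ‖lam‖ ≤ (⌈2 * ‖lam‖⌉₊ : ℝ) := Nat.le_ceil _
        _ ≤ (n : ℝ) := by exact_mod_cast Nat.le_of_succ_le h
    have h3 : (n : ℝ) / 2 ≤ ‖(n : ℂ) - lam‖ := by
      have := norm_sub_norm_le ((n : ℂ)) lam
      rw [Complex.norm_natCast] at this
      linarith
    have hsum : (0:ℝ) ≤ ∑ i ∈ Finset.range N, (i : ℝ) / ‖(i : ℂ) - lam‖ :=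
      Finset.sum_nonneg fun i _ => by positivity
    nlinarith [norm_nonneg ((n:ℂ) - lam)]

set_option maxHeartbeats 1000000 in
/-- For each flat position `j`, the family `C_{n_j}^{n₁…n_L}/(n_j - λ)` is absolutely
summable over strictly decreasing tuples `n₁ > ⋯ > n_L > 0`, where
`C_{n_j}^{n₁…n_L} = (∏ᵢ 1/n_{L_{i-1}+1}^{kᵢ}) ∏_{i ≠ j} 1/(nᵢ - n_j)`. -/
theorem coeff_summable (m : ℕ) (hm : 1 ≤ m) (k l : Fin m → ℕ)
    (hk : 1 ≤ k ⟨0, hm⟩) (hl : 1 ≤ l ⟨m - 1, by omega⟩)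
    (lam : ℂ) (hlam : ∀ n : ℕ, 0 < n → lam ≠ (n : ℂ))
    (j : ℕ) (hj : j < ∑ i, l i) :
    Summable fun t : DecSeq (∑ i, l i) =>
      ‖((∏ i : Fin m, 1 / ((t.1 (Lpart m l i) : ℂ)) ^ k i) *
            ∏ i ∈ (Finset.range (∑ i, l i)).erase j, 1 / ((t.1 i : ℂ) - (t.1 j : ℂ))) /
          ((t.1 j : ℂ) - lam)‖ := by
  classical
  set L : ℕ := ∑ i, l i with hLdef
  have hL1 : 1 ≤ L := lt_of_le_of_lt (Nat.zero_le j) hj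
  obtain ⟨C₀, hC₀pos, hC₀⟩ := lam_bound lam hlam
  set δ : ℝ := 1 / (4 * L) with hδdef
  have hLpos : (0:ℝ) < L := by exact_mod_cast hL1
  have hδpos : 0 < δ := by rw [hδdef]; positivity
  have hL1R : (1:ℝ) ≤ (L:ℝ) := by exact_mod_cast hL1
  have hδ14 : δ ≤ 1/4 := by
    rw [hδdef, div_le_div_iff₀ (by positivity) (by norm_num)]
    nlinarith
  set wj : ℕ → ℝ := fun x => (max (x : ℝ) 1) ^ (-(5/4 : ℝ)) with hwjdef
  set wo : ℕ → ℝ := fun x => (max (x : ℝ) 1) ^ (-(1 + δ)) with hwodef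
  have hwjs : Summable wj := summable_maxpow _ (by norm_num)
  have hwos : Summable wo := summable_maxpow _ (by linarith)
  have hmax1 : ∀ x : ℕ, (0:ℝ) < max (x:ℝ) 1 := fun x =>
    lt_of_lt_of_le zero_lt_one (le_max_right _ _)
  have hwj0 : ∀ x, 0 ≤ wj x := fun x => Real.rpow_nonneg (hmax1 x).le _
  have hwo0 : ∀ x, 0 ≤ wo x := fun x => Real.rpow_nonneg (hmax1 x).le _
  set f : Fin L → ℕ → ℝ := fun i x => if (i:ℕ) = j then wj x else wo x with hfdef
  set Φ : DecSeq L → (Fin L → ℕ) := fun t i =>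
    if (i:ℕ) = j then t.1 j else if (i:ℕ) < j then t.1 i - t.1 j else t.1 j - t.1 i with hΦdef
  have hΦinj : Function.Injective Φ := by
    intro t s h
    have hjj : t.1 j = s.1 j := by
      have := congrFun h ⟨j, hj⟩
      simpa [hΦdef] using this
    apply Subtype.ext; funext i
    rcases lt_or_ge i L with hiL | hiL
    · rcases lt_trichotomy i j with hij | hij | hij
      · have := congrFun h ⟨i, hiL⟩
        simp only [hΦdef, Fin.val_mk, if_neg (Nat.ne_of_lt hij), if_pos hij] at this
        have h1 : t.1 j < t.1 i := t.2.1 i j hij hj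
        have h2 : s.1 j < s.1 i := s.2.1 i j hij hj
        omega
      · subst hij; exact hjj
      · have := congrFun h ⟨i, hiL⟩
        simp only [hΦdef, Fin.val_mk, if_neg (Nat.ne_of_gt hij),
          if_neg (Nat.not_lt.2 hij.le)] at this
        have h1 : t.1 i < t.1 j := t.2.1 j i hij hiL
        have h2 : s.1 i < s.1 j := s.2.1 j i hij hiL
        omega
    · rw [t.2.2.2 i hiL, s.2.2.2 i hiL]
  have hfs : ∀ i : Fin L, Summable (f i) := by
    intro i; rw [hfdef]; dsimp only; split
    · exact hwjs
    · exact hwos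
  have hf0 : ∀ (i : Fin L) (x : ℕ), 0 ≤ f i x := by
    intro i x; rw [hfdef]; dsimp only; split
    · exact hwj0 x
    · exact hwo0 x
  have hG : Summable fun v : Fin L → ℕ => ∏ i, f i (v i) := summable_pi_prod f hfs hf0
  have hGΦ : Summable fun t : DecSeq L => C₀ * ∏ i, f i (Φ t i) :=
    Summable.mul_left C₀ (hG.comp_injective hΦinj)
  refine Summable.of_nonneg_of_le (fun t => norm_nonneg _) ?_ hGΦ
  intro t
  -- notation
  set a : ℕ := t.1 j with hadef
  have ha1 : 1 ≤ a := t.2.2.1 j hj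
  have ha1R : (1:ℝ) ≤ (a:ℝ) := by exact_mod_cast ha1
  have haR : (0:ℝ) < (a:ℝ) := by exact_mod_cast ha1
  set v : ℕ → ℕ := fun i => if i < j then t.1 i - t.1 j else t.1 j - t.1 i with hvdef
  set V : ℕ := max (v 0) 1 with hVdef
  have hV1 : 1 ≤ V := le_max_right _ _
  have hV1R : (1:ℝ) ≤ (V:ℝ) := by exact_mod_cast hV1
  have hVR : (0:ℝ) < (V:ℝ) := lt_of_lt_of_le zero_lt_one hV1R
  set E : Finset ℕ := (Finset.range L).erase j with hEdef
  -- basic facts about v on E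
  have hvE : ∀ i ∈ E, 1 ≤ v i ∧ v i ≤ a * V := by
    intro i hi
    have hiL : i < L := Finset.mem_range.1 (Finset.mem_of_mem_erase hi)
    have hine : i ≠ j := Finset.ne_of_mem_erase hi
    rcases lt_or_gt_of_ne hine with hij | hij
    · have h1 : t.1 j < t.1 i := t.2.1 i j hij hj
      have h0 : t.1 i ≤ t.1 0 := by
        rcases Nat.eq_zero_or_pos i with h | h
        · rw [h]
        · exact (t.2.1 0 i h hiL).le
      have hj0 : 0 < j := Nat.pos_of_ne_zero (by omega)
      have hv0 : v 0 = t.1 0 - t.1 j := by rw [hvdef]; simp [hj0]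
      have hvi : v i = t.1 i - t.1 j := by rw [hvdef]; simp [hij]
      have hle : v i ≤ V := by
        have : v 0 ≤ V := le_max_left _ _
        omega
      refine ⟨by omega, le_trans hle ?_⟩
      calc V = 1 * V := (one_mul V).symm
        _ ≤ a * V := Nat.mul_le_mul_right V ha1
    · have h1 : t.1 i < t.1 j := t.2.1 j i hij hiL
      have hvi : v i = t.1 j - t.1 i := by
        rw [hvdef]; simp [Nat.not_lt.2 hij.le]
      refine ⟨by omega, ?_⟩
      calc v i ≤ a := by omega
        _ = a * 1 := (mul_one a).symm
        _ ≤ a * V := Nat.mul_le_mul_left a hV1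
  have hnormv : ∀ i ∈ E, ‖1 / ((t.1 i : ℂ) - (t.1 j : ℂ))‖ = ((v i : ℝ))⁻¹ := by
    intro i hi
    have hiL : i < L := Finset.mem_range.1 (Finset.mem_of_mem_erase hi)
    have hine : i ≠ j := Finset.ne_of_mem_erase hi
    rw [norm_div, norm_one]
    rcases lt_or_gt_of_ne hine with hij | hij
    · have h1 : t.1 j < t.1 i := t.2.1 i j hij hj
      have he : ((t.1 i : ℂ) - (t.1 j : ℂ)) = ((t.1 i - t.1 j : ℕ) : ℂ) := by
        rw [Nat.cast_sub h1.le]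
      rw [he, Complex.norm_natCast, one_div, hvdef]
      simp [hij]
    · have h1 : t.1 i < t.1 j := t.2.1 j i hij hiL
      have he : ((t.1 i : ℂ) - (t.1 j : ℂ)) = -((t.1 j - t.1 i : ℕ) : ℂ) := by
        rw [Nat.cast_sub h1.le]; ring
      rw [he, norm_neg, Complex.norm_natCast, one_div, hvdef]
      simp [Nat.not_lt.2 hij.le]
  -- Lpart facts
  have hLpartlt : ∀ i : Fin m, Lpart m l i < L := by
    intro i
    have h1 : Lpart m l i ≤ ∑ x ∈ Finset.univ.erase (⟨m - 1, by omega⟩ : Fin m), l x := by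
      rw [Lpart, ← Finset.sum_filter]
      apply Finset.sum_le_sum_of_subset
      intro x hx
      rw [Finset.mem_filter] at hx
      rw [Finset.mem_erase]
      refine ⟨?_, Finset.mem_univ _⟩
      have hxi : (x : ℕ) < (i : ℕ) := hx.2
      have him : (i : ℕ) < m := i.isLt
      intro hcon
      rw [hcon] at hxi
      simp only [Fin.val_mk] at hxi
      omega
    have h2 : (∑ x ∈ Finset.univ.erase (⟨m - 1, by omega⟩ : Fin m), l x)
        + l ⟨m - 1, by omega⟩ = L := by
      exact Finset.sum_erase_add _ _ (Finset.mem_univ _)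
    omega
  have hLpart0 : Lpart m l ⟨0, hm⟩ = 0 := by
    rw [Lpart]
    apply Finset.sum_eq_zero
    intro x _
    rw [if_neg]
    intro hcon
    have := (Fin.lt_def.1 hcon)
    simp only [Fin.val_mk] at this
    omega
  -- bound on the k-part
  have ht0 : 1 ≤ t.1 0 := t.2.2.1 0 (by omega)
  have ht0R : (1:ℝ) ≤ (t.1 0 : ℝ) := by exact_mod_cast ht0
  have hPn : (∏ i : Fin m, ‖1 / ((t.1 (Lpart m l i) : ℂ)) ^ k i‖) ≤ ((t.1 0 : ℝ))⁻¹ := by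
    have hb : ∀ i : Fin m, ‖1 / ((t.1 (Lpart m l i) : ℂ)) ^ k i‖
        ≤ (if i = (⟨0, hm⟩ : Fin m) then ((t.1 0 : ℝ))⁻¹ else 1) := by
      intro i
      have hpos' : 1 ≤ t.1 (Lpart m l i) := t.2.2.1 _ (hLpartlt i)
      have hposR : (1:ℝ) ≤ (t.1 (Lpart m l i) : ℝ) := by exact_mod_cast hpos'
      rw [norm_div, norm_one, norm_pow, Complex.norm_natCast, one_div]
      split
      · next h =>
        subst h
        rw [hLpart0]
        exact inv_anti₀ (by linarith) (le_self_pow₀ ht0R (by omega))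
      · next h =>
        exact inv_le_one_of_one_le₀ (one_le_pow₀ hposR)
    calc (∏ i : Fin m, ‖1 / ((t.1 (Lpart m l i) : ℂ)) ^ k i‖)
        ≤ ∏ i : Fin m, (if i = (⟨0, hm⟩ : Fin m) then ((t.1 0 : ℝ))⁻¹ else 1) :=
          Finset.prod_le_prod (fun i _ => norm_nonneg _) (fun i _ => hb i)
      _ = ((t.1 0 : ℝ))⁻¹ := by simp
  -- bound on the lambda part
  have hDpos : 0 < ‖(t.1 j : ℂ) - lam‖ := by
    rw [norm_pos_iff, sub_ne_zero]
    exact fun h => hlam (t.1 j) ha1 h.symm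
  have hDn : ‖(t.1 j : ℂ) - lam‖⁻¹ ≤ C₀ * ((a:ℝ))⁻¹ := by
    have h1 : (a : ℝ) ≤ C₀ * ‖(t.1 j : ℂ) - lam‖ := hC₀ a ha1
    have key : (a:ℝ) * ‖(t.1 j : ℂ) - lam‖⁻¹ ≤ C₀ := by
      rw [mul_inv_le_iff₀ hDpos]; linarith
    calc ‖(t.1 j : ℂ) - lam‖⁻¹ = (a:ℝ)⁻¹ * ((a:ℝ) * ‖(t.1 j : ℂ) - lam‖⁻¹) := by
          field_simp
      _ ≤ (a:ℝ)⁻¹ * C₀ := mul_le_mul_of_nonneg_left key (by positivity)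
      _ = C₀ * (a:ℝ)⁻¹ := mul_comm _ _
  -- the key AM-GM style inequality
  have hkey : ((a:ℝ)) ^ ((2:ℝ))⁻¹ * ((V:ℝ)) ^ ((4:ℝ))⁻¹ ≤ (t.1 0 : ℝ) := by
    rcases Nat.eq_zero_or_pos j with hj0 | hj0
    · have hv00 : v 0 = 0 := by rw [hvdef]; simp [hj0]
      have hV : V = 1 := by rw [hVdef, hv00]; simp
      have ha0 : a = t.1 0 := by rw [hadef, hj0]
      rw [hV, Nat.cast_one, Real.one_rpow, mul_one, ← ha0]
      calc (a:ℝ) ^ ((2:ℝ))⁻¹ ≤ (a:ℝ) ^ (1:ℝ) :=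
            Real.rpow_le_rpow_of_exponent_le ha1R (by norm_num)
        _ = (a:ℝ) := Real.rpow_one _
    · have hlt : t.1 j < t.1 0 := t.2.1 0 j hj0 hj
      have hv0 : v 0 = t.1 0 - t.1 j := by rw [hvdef]; simp [hj0]
      have hV : V = t.1 0 - a := by rw [hVdef, hv0, hadef]; omega
      have hsumN : t.1 0 = a + V := by omega
      have hsum : (t.1 0 : ℝ) = (a:ℝ) + (V:ℝ) := by exact_mod_cast congrArg Nat.cast hsumN
      calc ((a:ℝ)) ^ ((2:ℝ))⁻¹ * ((V:ℝ)) ^ ((4:ℝ))⁻¹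
          ≤ ((a:ℝ)) ^ ((2:ℝ))⁻¹ * ((V:ℝ)) ^ ((2:ℝ))⁻¹ := by
            apply mul_le_mul_of_nonneg_left
              (Real.rpow_le_rpow_of_exponent_le hV1R (by norm_num))
              (Real.rpow_nonneg haR.le _)
        _ = ((a:ℝ) * V) ^ ((2:ℝ))⁻¹ := (Real.mul_rpow haR.le hVR.le).symm
        _ ≤ (((a:ℝ) + V) ^ (2:ℕ)) ^ ((2:ℝ))⁻¹ := by
            apply Real.rpow_le_rpow (by positivity) (by nlinarith) (by norm_num)
        _ = (a:ℝ) + V := by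
            rw [← Real.rpow_natCast ((a:ℝ) + V) 2, ← Real.rpow_mul (by positivity)]
            norm_num
        _ = (t.1 0 : ℝ) := hsum.symm
  -- bound on the difference part
  have hprodwo0 : (0:ℝ) ≤ ∏ i ∈ E, wo (v i) := Finset.prod_nonneg fun i _ => hwo0 _
  have hAV1 : (1:ℝ) ≤ (a:ℝ) * V := by nlinarith
  have hQn : (∏ i ∈ E, ‖1 / ((t.1 i : ℂ) - (t.1 j : ℂ))‖)
      ≤ (((a:ℝ) * V) ^ ((4:ℝ))⁻¹) * ∏ i ∈ E, wo (v i) := by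
    have step1 : ∀ i ∈ E, ‖1 / ((t.1 i : ℂ) - (t.1 j : ℂ))‖
        ≤ (((a:ℝ) * V) ^ δ) * wo (v i) := by
      intro i hi
      obtain ⟨h1v, hle⟩ := hvE i hi
      have h1vR : (1:ℝ) ≤ (v i : ℝ) := by exact_mod_cast h1v
      have h0vR : (0:ℝ) < (v i : ℝ) := lt_of_lt_of_le zero_lt_one h1vR
      have hwov : wo (v i) = ((v i : ℝ)) ^ (-(1 + δ)) := by
        rw [hwodef]; dsimp only; rw [max_eq_left h1vR]
      rw [hnormv i hi, hwov]
      have he : ((v i : ℝ))⁻¹ = ((v i : ℝ)) ^ δ * ((v i : ℝ)) ^ (-(1 + δ)) := by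
        rw [← Real.rpow_add h0vR, show δ + -(1 + δ) = -1 by ring, Real.rpow_neg_one]
      rw [he]
      apply mul_le_mul_of_nonneg_right _ (Real.rpow_nonneg h0vR.le _)
      apply Real.rpow_le_rpow h0vR.le _ hδpos.le
      exact_mod_cast hle
    calc (∏ i ∈ E, ‖1 / ((t.1 i : ℂ) - (t.1 j : ℂ))‖)
        ≤ ∏ i ∈ E, ((((a:ℝ) * V) ^ δ) * wo (v i)) :=
          Finset.prod_le_prod (fun i _ => norm_nonneg _) step1
      _ = (((a:ℝ) * V) ^ δ) ^ E.card * ∏ i ∈ E, wo (v i) := by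
          rw [Finset.prod_mul_distrib, Finset.prod_const]
      _ ≤ (((a:ℝ) * V) ^ ((4:ℝ))⁻¹) * ∏ i ∈ E, wo (v i) := by
          apply mul_le_mul_of_nonneg_right _ hprodwo0
          rw [← Real.rpow_natCast (((a:ℝ) * V) ^ δ) E.card,
            ← Real.rpow_mul (by positivity)]
          apply Real.rpow_le_rpow_of_exponent_le hAV1
          have hcard : E.card = L - 1 := by
            rw [hEdef, Finset.card_erase_of_mem (Finset.mem_range.2 hj), Finset.card_range]
          rw [hcard]
          have hc : ((L - 1 : ℕ) : ℝ) ≤ (L : ℝ) := by exact_mod_cast Nat.sub_le L 1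
          have hc0 : (0:ℝ) ≤ ((L - 1 : ℕ) : ℝ) := Nat.cast_nonneg _
          calc δ * ((L - 1 : ℕ) : ℝ) ≤ δ * (L:ℝ) := mul_le_mul_of_nonneg_left hc hδpos.le
            _ = (4:ℝ)⁻¹ := by rw [hδdef]; field_simp
  -- the exponent bookkeeping
  have hchain : ((t.1 0:ℝ))⁻¹ * (((a:ℝ) * V) ^ ((4:ℝ))⁻¹) * ((a:ℝ))⁻¹
      ≤ (a:ℝ) ^ (-(5/4 : ℝ)) := by
    set x : ℝ := (a:ℝ) ^ ((4:ℝ))⁻¹ with hx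
    set y : ℝ := (V:ℝ) ^ ((4:ℝ))⁻¹ with hy
    have hx0 : 0 < x := Real.rpow_pos_of_pos haR _
    have hy0 : 0 < y := Real.rpow_pos_of_pos hVR _
    have hax : (a:ℝ) = x ^ (4:ℕ) := by
      rw [hx, ← Real.rpow_natCast ((a:ℝ) ^ ((4:ℝ))⁻¹) 4, ← Real.rpow_mul haR.le]
      norm_num
    have hx2 : (a:ℝ) ^ ((2:ℝ))⁻¹ = x ^ (2:ℕ) := by
      rw [hx, ← Real.rpow_natCast ((a:ℝ) ^ ((4:ℝ))⁻¹) 2, ← Real.rpow_mul haR.le]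
      norm_num
    have hmul : (((a:ℝ) * V) ^ ((4:ℝ))⁻¹) = x * y := Real.mul_rpow haR.le hVR.le
    have hneg : (a:ℝ) ^ (-(5/4 : ℝ)) = (x ^ (5:ℕ))⁻¹ := by
      rw [hx, ← Real.rpow_natCast ((a:ℝ) ^ ((4:ℝ))⁻¹) 5, ← Real.rpow_mul haR.le,
        ← Real.rpow_neg haR.le]
      norm_num
    have hN : x ^ (2:ℕ) * y ≤ (t.1 0 : ℝ) := by rw [← hx2]; exact hkey
    have hN0 : (0:ℝ) < (t.1 0 : ℝ) := by linarith
    have h1 : ((t.1 0:ℝ))⁻¹ ≤ (x ^ (2:ℕ) * y)⁻¹ := inv_anti₀ (by positivity) hN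
    rw [hmul, hneg]
    calc ((t.1 0:ℝ))⁻¹ * (x * y) * ((a:ℝ))⁻¹
        ≤ (x ^ (2:ℕ) * y)⁻¹ * (x * y) * ((a:ℝ))⁻¹ := by
          apply mul_le_mul_of_nonneg_right
            (mul_le_mul_of_nonneg_right h1 (by positivity)) (by positivity)
      _ = (x ^ (5:ℕ))⁻¹ := by
          rw [hax]; field_simp
  -- identification of the right-hand side
  have hRHS : (∏ i : Fin L, f i (Φ t i)) = wj a * ∏ i ∈ E, wo (v i) := by
    have h1 : ∀ i : Fin L, f i (Φ t i)
        = (fun x : ℕ => if x = j then wj a else wo (v x)) (i : ℕ) := by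
      intro i
      by_cases h : (i:ℕ) = j
      · simp only [hfdef, hΦdef, h, if_true]; rfl
      · simp only [hfdef, hΦdef, hvdef, h, if_neg h, if_false]
    calc (∏ i : Fin L, f i (Φ t i))
        = ∏ i : Fin L, (fun x : ℕ => if x = j then wj a else wo (v x)) (i:ℕ) :=
          Finset.prod_congr rfl fun i _ => h1 i
      _ = ∏ i ∈ Finset.range L, (fun x : ℕ => if x = j then wj a else wo (v x)) i :=
          Fin.prod_univ_eq_prod_range (fun x : ℕ => if x = j then wj a else wo (v x)) L
      _ = wj a * ∏ i ∈ E, wo (v i) := by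
          rw [hEdef, ← Finset.mul_prod_erase (Finset.range L)
            (fun i => if i = j then wj a else wo (v i)) (Finset.mem_range.2 hj)]
          simp only [if_pos rfl]
          congr 1
          refine Finset.prod_congr rfl fun x hx => ?_
          simp only [if_neg (Finset.ne_of_mem_erase hx)]
  have hwja : wj a = (a:ℝ) ^ (-(5/4:ℝ)) := by
    rw [hwjdef]; dsimp only; rw [max_eq_left ha1R]
  -- assembling everything
  show ‖((∏ i : Fin m, 1 / ((t.1 (Lpart m l i) : ℂ)) ^ k i) *
            ∏ i ∈ E, 1 / ((t.1 i : ℂ) - (t.1 j : ℂ))) /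
          ((t.1 j : ℂ) - lam)‖ ≤ C₀ * ∏ i : Fin L, f i (Φ t i)
  rw [hRHS, hwja, norm_div, norm_mul, norm_prod, norm_prod, div_eq_mul_inv]
  refine le_trans (mul_le_mul (mul_le_mul hPn hQn
    (Finset.prod_nonneg fun i _ => norm_nonneg _) (by positivity)) hDn (by positivity)
    (mul_nonneg (by positivity) (mul_nonneg (by positivity) hprodwo0))) ?_
  have hfin := mul_le_mul_of_nonneg_right hchain (mul_nonneg hC₀pos.le hprodwo0)
  calc ((t.1 0:ℝ))⁻¹ * ((((a:ℝ) * V) ^ ((4:ℝ))⁻¹) * ∏ i ∈ E, wo (v i)) * (C₀ * ((a:ℝ))⁻¹)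
      = ((t.1 0:ℝ))⁻¹ * (((a:ℝ) * V) ^ ((4:ℝ))⁻¹) * ((a:ℝ))⁻¹
          * (C₀ * ∏ i ∈ E, wo (v i)) := by ring
    _ ≤ (a:ℝ) ^ (-(5/4 : ℝ)) * (C₀ * ∏ i ∈ E, wo (v i)) := hfin
    _ = C₀ * ((a:ℝ) ^ (-(5/4 : ℝ)) * ∏ i ∈ E, wo (v i)) := by ring
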